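/- Let n ≥ 1, let p be an integer with 1 ≤ p ≤ n, let A and D be n×n real matrices, and suppose x ∈ ℝⁿ satisfies x_i − x_j ≥ D(i,j) for all i, j and (A ⊗_p x)_i = λ + x_i for all i, where λ ∈ ℝ. Define L(i,j) := ⊕_p(l ↦ A(i,l) + D(l,j)), U(i,j) := ⊕_p(l ↦ A(i,l) − D(j,l)), l := max{L(1,1), …, L(n,n)}, u := min{U(1,1), …, U(n,n)}, P(i,j) := A(i,j) + D(j,i) and Q(i,j) := A(i,j) − D(i,j). If P(i,j) > u or Q(i,j) < l, then (i,j) is inactive, i.e., (A ⊗_p x)_i ≠ A(i,j) + x_j. -/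

import Mathlib

/-- The maxmin-`p` value of `s : Fin n → ℝ`: the `p`-th smallest element (1-indexed) of the
multiset `{s 0, …, s (n-1)}`, counted with multiplicity. -/
noncomputable def maxmin {n : ℕ} (p : ℕ) (s : Fin n → ℝ) : ℝ :=
  (Multiset.sort (Multiset.map s (Finset.univ : Finset (Fin n)).val) (· ≤ ·)).getD (p - 1) 0

/-- The maxmin-`p` matrix-vector product: `(A ⊗_p x)_i = ⊕_p (j ↦ A i j + x j)`. -/
noncomputable def mmProd {n : ℕ} (p : ℕ) (A : Fin n → Fin n → ℝ) (x : Fin n → ℝ) :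
    Fin n → ℝ :=
  fun i => maxmin p (fun j => A i j + x j)

private lemma countP_take_ge {l : List ℝ} (hl : l.Pairwise (· ≤ ·)) {k : ℕ}
    (hk : k < l.length) : k + 1 ≤ l.countP (fun a => decide (a ≤ l[k])) := by
  have hsub : (l.take (k+1)).Sublist l := List.take_sublist _ _
  have hle : (l.take (k+1)).countP (fun a => decide (a ≤ l[k])) ≤
      l.countP (fun a => decide (a ≤ l[k])) := hsub.countP_le
  have hall : ∀ a ∈ l.take (k+1), a ≤ l[k] := by
    intro a ha
    obtain ⟨i, hi, rfl⟩ := List.getElem_of_mem ha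
    rw [List.length_take] at hi
    rw [List.getElem_take]
    exact hl.rel_get_of_le (a := ⟨i, by omega⟩) (b := ⟨k, hk⟩) (by simp; omega)
  have hlen : (l.take (k+1)).length = k + 1 := by
    rw [List.length_take]; omega
  have : (l.take (k+1)).countP (fun a => decide (a ≤ l[k])) = (l.take (k+1)).length :=
    List.countP_eq_length.mpr (fun a ha => by simpa using hall a ha)
  omega

private lemma get_le_of_countP {l : List ℝ} (hl : l.Pairwise (· ≤ ·)) {k : ℕ}
    (hk : k < l.length) {v : ℝ} (hc : k + 1 ≤ l.countP (fun a => decide (a ≤ v))) :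
    l[k] ≤ v := by
  by_contra hlt
  push_neg at hlt
  have hsplit : l.countP (fun a => decide (a ≤ v)) =
      (l.take k).countP (fun a => decide (a ≤ v)) +
      (l.drop k).countP (fun a => decide (a ≤ v)) := by
    conv_lhs => rw [← List.take_append_drop k l]
    exact List.countP_append
  have h1 : (l.take k).countP (fun a => decide (a ≤ v)) ≤ k :=
    le_trans (List.countP_le_length) (by rw [List.length_take]; omega)
  have h2 : (l.drop k).countP (fun a => decide (a ≤ v)) = 0 := by
    rw [List.countP_eq_zero]
    intro a ha
    obtain ⟨i, hi, rfl⟩ := List.getElem_of_mem ha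
    rw [List.length_drop] at hi
    rw [List.getElem_drop]
    have : l[k] ≤ l[k + i] :=
      hl.rel_get_of_le (a := ⟨k, hk⟩) (b := ⟨k + i, by omega⟩) (by simp)
    simp only [decide_eq_true_eq]
    push_neg
    linarith
  omega

private lemma maxmin_mono {n : ℕ} (p : ℕ) {s t : Fin n → ℝ} (h : ∀ l, s l ≤ t l) :
    maxmin p s ≤ maxmin p t := by
  unfold maxmin
  set ls := Multiset.sort (Multiset.map s (Finset.univ : Finset (Fin n)).val) (· ≤ ·) with hls
  set lt := Multiset.sort (Multiset.map t (Finset.univ : Finset (Fin n)).val) (· ≤ ·) with hlt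
  have hlsl : ls.length = n := by simp [hls, Multiset.length_sort]
  have hltl : lt.length = n := by simp [hlt, Multiset.length_sort]
  by_cases hp : p - 1 < n
  · have hi1 : p - 1 < ls.length := by omega
    have hi2 : p - 1 < lt.length := by omega
    rw [List.getD_eq_getElem ls _ hi1, List.getD_eq_getElem lt _ hi2]
    set v := lt[p-1]'hi2 with hv
    have h1 : p - 1 + 1 ≤ lt.countP (fun a => decide (a ≤ v)) :=
      countP_take_ge (Multiset.pairwise_sort _ _) hi2
    have hcs : ls.countP (fun a => decide (a ≤ v)) =
        ((Finset.univ : Finset (Fin n)).filter (fun l => s l ≤ v)).card := by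
      rw [← Multiset.coe_countP, hls, Multiset.sort_eq, Multiset.countP_map,
        ← Finset.filter_val, Finset.card_def]
    have hct : lt.countP (fun a => decide (a ≤ v)) =
        ((Finset.univ : Finset (Fin n)).filter (fun l => t l ≤ v)).card := by
      rw [← Multiset.coe_countP, hlt, Multiset.sort_eq, Multiset.countP_map,
        ← Finset.filter_val, Finset.card_def]
    have hsub : ((Finset.univ : Finset (Fin n)).filter (fun l => t l ≤ v)) ⊆
        ((Finset.univ : Finset (Fin n)).filter (fun l => s l ≤ v)) := by
      intro a ha
      simp only [Finset.mem_filter, Finset.mem_univ, true_and] at ha ⊢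
      exact le_trans (h a) ha
    have h2 : p - 1 + 1 ≤ ls.countP (fun a => decide (a ≤ v)) := by
      rw [hcs]; rw [hct] at h1
      exact le_trans h1 (Finset.card_le_card hsub)
    exact get_le_of_countP (Multiset.pairwise_sort _ _) hi1 h2
  · rw [List.getD_eq_default _ _ (by omega), List.getD_eq_default _ _ (by omega)]

private lemma maxmin_add_const {n p : ℕ} (hp : p - 1 < n) (s : Fin n → ℝ) (c : ℝ) :
    maxmin p (fun l => s l + c) = maxmin p s + c := by
  unfold maxmin
  have hmap : (Multiset.sort (Multiset.map s (Finset.univ : Finset (Fin n)).val) (· ≤ ·)).map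
      (fun a => a + c) =
      Multiset.sort (Multiset.map (fun l => s l + c) (Finset.univ : Finset (Fin n)).val) (· ≤ ·) := by
    rw [Multiset.map_sort (r := (· ≤ ·)) (r' := (· ≤ ·)) (fun a => a + c)
      (Multiset.map s (Finset.univ : Finset (Fin n)).val)
      (fun a _ b _ => (add_le_add_iff_right c).symm), Multiset.map_map]
    rfl
  rw [← hmap]
  have hlen : (Multiset.sort (Multiset.map s (Finset.univ : Finset (Fin n)).val) (· ≤ ·)).length
      = n := by simp [Multiset.length_sort]
  rw [List.getD_eq_getElem _ _ (by simp [hlen]; omega),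
    List.getD_eq_getElem _ _ (by omega : p - 1 < _), List.getElem_map]

private lemma maxmin_le_add {n p : ℕ} (hp1 : 1 ≤ p) (hpn : p ≤ n) {s t : Fin n → ℝ} {c : ℝ}
    (h : ∀ l, s l ≤ t l + c) : maxmin p s ≤ maxmin p t + c :=
  le_trans (maxmin_mono p h) (le_of_eq (maxmin_add_const (by omega) t c))

/-- Let `L i j := ⊕_p(l ↦ A i l + D l j)`, `U i j := ⊕_p(l ↦ A i l − D j l)`,
`l := max_i L i i`, `u := min_i U i i`, `P i j := A i j + D j i` and
`Q i j := A i j − D i j`. If `P i j > u` or `Q i j < l`, then `(i,j)` is inactive with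
respect to `p` and any maxmin-`p` eigenvector `x ∈ Zone(D)`:
`(A ⊗_p x)_i ≠ A i j + x j`. -/
theorem inactive_entry_of_PQ (n p : ℕ) (hn : 1 ≤ n) (hp1 : 1 ≤ p) (hpn : p ≤ n)
    (A D : Fin n → Fin n → ℝ) (x : Fin n → ℝ) (lam : ℝ)
    (hzone : ∀ i j, x i - x j ≥ D i j)
    (heig : ∀ i, mmProd p A x i = lam + x i)
    (i j : Fin n)
    (h : A i j + D j i >
          (Finset.univ : Finset (Fin n)).inf' ⟨⟨0, hn⟩, Finset.mem_univ _⟩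
            (fun i => maxmin p (fun l => A i l - D i l)) ∨
         A i j - D i j <
          (Finset.univ : Finset (Fin n)).sup' ⟨⟨0, hn⟩, Finset.mem_univ _⟩
            (fun i => maxmin p (fun l => A i l + D l i))) :
    mmProd p A x i ≠ A i j + x j := by
  intro hact
  have hlam : lam = A i j + x j - x i := by
    have := heig i; rw [hact] at this; linarith
  have hu : ∀ k, lam ≤ maxmin p (fun l => A k l - D k l) := by
    intro k
    have hb : maxmin p (fun l => A k l + x l) ≤ maxmin p (fun l => A k l - D k l) + x k :=
      maxmin_le_add hp1 hpn (fun l => by have := hzone k l; linarith)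
    have := heig k
    unfold mmProd at this
    rw [this] at hb
    linarith
  have hlo : ∀ k, maxmin p (fun l => A k l + D l k) ≤ lam := by
    intro k
    have hb : maxmin p (fun l => A k l + D l k) ≤ maxmin p (fun l => A k l + x l) + (-x k) :=
      maxmin_le_add hp1 hpn (fun l => by have := hzone l k; linarith)
    have := heig k
    unfold mmProd at this
    rw [this] at hb
    linarith
  rcases h with h | h
  · have hinf : lam ≤ (Finset.univ : Finset (Fin n)).inf' ⟨⟨0, hn⟩, Finset.mem_univ _⟩
        (fun i => maxmin p (fun l => A i l - D i l)) :=
      Finset.le_inf' _ _ (fun k _ => hu k)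
    have := hzone j i
    linarith
  · have hsup : (Finset.univ : Finset (Fin n)).sup' ⟨⟨0, hn⟩, Finset.mem_univ _⟩
        (fun i => maxmin p (fun l => A i l + D l i)) ≤ lam :=
      Finset.sup'_le _ _ (fun k _ => hlo k)
    have := hzone i j
    linarith
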